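/- Let λ, λ̃ ∈ ℝ and let G, G̃ be probability measures on (0,∞). If the zero-location SNSM densities coincide, i.e., f_SNSM(z; 0, λ, G) = f_SNSM(z; 0, λ̃, G̃) for almost all z ∈ ℝ, then λ = λ̃ and G = G̃. -/

import Mathlib

open MeasureTheory

/-- Standard normal density. -/
noncomputable def stdPhi (z : ℝ) : ℝ := Real.exp (-(z ^ 2) / 2) / Real.sqrt (2 * Real.pi)

/-- Standard normal cumulative distribution function. -/
noncomputable def stdPhiCDF (z : ℝ) : ℝ := ∫ t in Set.Iic z, stdPhi t

/-- Skew-normal density with location `μ`, shape `lam`, scale `σ`. -/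
noncomputable def snPDF (μ lam σ z : ℝ) : ℝ :=
  (2 / σ) * stdPhi ((z - μ) / σ) * stdPhiCDF (lam * ((z - μ) / σ))

/-- Skew-normal scale mixture density with mixing distribution `G` on `(0, ∞)`. -/
noncomputable def snsmPDF (μ lam : ℝ) (G : Measure ℝ) (z : ℝ) : ℝ :=
  ∫ σ, snPDF μ lam σ z ∂G

open Real Set
open scoped ENNReal NNReal

lemma stdPhi_pos (z : ℝ) : 0 < stdPhi z := by
  apply div_pos (Real.exp_pos _)
  exact Real.sqrt_pos.2 (by positivity)

lemma stdPhi_even (z : ℝ) : stdPhi (-z) = stdPhi z := by simp [stdPhi]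

lemma continuous_stdPhi : Continuous stdPhi := by
  unfold stdPhi; fun_prop

lemma integrable_stdPhi : Integrable stdPhi := by
  have h : Integrable (fun x : ℝ => Real.exp (-(1/2 : ℝ) * x ^ 2)) :=
    integrable_exp_neg_mul_sq (by norm_num)
  have := h.div_const (Real.sqrt (2 * Real.pi))
  refine this.congr (Filter.Eventually.of_forall fun x => ?_)
  simp [stdPhi]; ring_nf

lemma integral_stdPhi : ∫ z, stdPhi z = 1 := by
  have h : ∫ x : ℝ, Real.exp (-(1/2 : ℝ) * x ^ 2) = Real.sqrt (Real.pi / (1/2)) :=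
    integral_gaussian (1/2)
  have h2 : ∫ z, stdPhi z = (∫ x : ℝ, Real.exp (-(1/2 : ℝ) * x ^ 2)) / Real.sqrt (2 * Real.pi) := by
    rw [← integral_div]
    congr 1; ext x; simp [stdPhi]; ring_nf
  rw [h2, h]
  rw [show Real.pi / (1/2) = 2 * Real.pi by ring]
  rw [div_self]
  positivity

lemma stdPhiCDF_nonneg (z : ℝ) : 0 ≤ stdPhiCDF z :=
  integral_nonneg fun t => (stdPhi_pos t).le

lemma stdPhiCDF_le_one (z : ℝ) : stdPhiCDF z ≤ 1 := by
  rw [stdPhiCDF, ← integral_stdPhi]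
  exact setIntegral_le_integral integrable_stdPhi
    (Filter.Eventually.of_forall fun t => (stdPhi_pos t).le)

lemma stdPhiCDF_add_neg (z : ℝ) : stdPhiCDF z + stdPhiCDF (-z) = 1 := by
  have h1 : stdPhiCDF (-z) = ∫ t in Set.Ioi z, stdPhi t := by
    rw [stdPhiCDF]
    have h := integral_comp_neg_Iic (-z) stdPhi
    simp only [neg_neg] at h
    rw [← h]
    exact integral_congr_ae (Filter.Eventually.of_forall fun t => (stdPhi_even t).symm)
  rw [h1, stdPhiCDF]
  have := integral_add_compl (measurableSet_Iic (a := z)) integrable_stdPhi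
  rw [Set.compl_Iic] at this
  rw [this, integral_stdPhi]

lemma continuous_stdPhiCDF : Continuous stdPhiCDF := by
  have h : Continuous fun b : ℝ => ∫ t in (0:ℝ)..b, stdPhi t :=
    intervalIntegral.continuous_primitive
      (fun a b => integrable_stdPhi.intervalIntegrable) 0
  have h2 : ∀ b : ℝ, stdPhiCDF b = stdPhiCDF 0 + ∫ t in (0:ℝ)..b, stdPhi t := by
    intro b
    have := intervalIntegral.integral_Iic_sub_Iic
      (integrable_stdPhi.integrableOn (s := Set.Iic (0:ℝ)))
      (integrable_stdPhi.integrableOn (s := Set.Iic b))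
    rw [stdPhiCDF, stdPhiCDF, ← this]; ring
  have : stdPhiCDF = fun b => stdPhiCDF 0 + ∫ t in (0:ℝ)..b, stdPhi t := funext h2
  rw [this]
  exact continuous_const.add h

lemma stdPhiCDF_strictMono : StrictMono stdPhiCDF := by
  intro a b hab
  have hsub : stdPhiCDF b - stdPhiCDF a = ∫ t in a..b, stdPhi t := by
    rw [stdPhiCDF, stdPhiCDF]
    rw [intervalIntegral.integral_Iic_sub_Iic
      (integrable_stdPhi.integrableOn (s := Set.Iic a))
      (integrable_stdPhi.integrableOn (s := Set.Iic b))]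
  have hpos : 0 < ∫ t in a..b, stdPhi t :=
    intervalIntegral.intervalIntegral_pos_of_pos_on
      integrable_stdPhi.intervalIntegrable (fun x _ => stdPhi_pos x) hab
  linarith

lemma stdPhi_mul_le (u : ℝ) (hu : 0 ≤ u) : u * Real.exp (-(u^2)/2) ≤ 1 := by
  have h := Real.add_one_le_exp (u^2/2)
  have h2 : u ≤ 1 + u^2/2 := by nlinarith
  have h3 : u ≤ Real.exp (u^2/2) := by linarith
  have h4 := Real.exp_pos (u^2/2)
  rw [show -(u^2)/2 = -(u^2/2) by ring, Real.exp_neg]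
  rw [mul_inv_le_iff₀ h4, one_mul]
  exact h3

lemma phi_scale_bound {σ z : ℝ} (hσ : 0 < σ) (hz : z ≠ 0) :
    (2 / σ) * stdPhi (z / σ) ≤ 2 / (Real.sqrt (2 * Real.pi) * |z|) := by
  have hz' : 0 < |z| := abs_pos.2 hz
  have hu0 : 0 < |z| / σ := div_pos hz' hσ
  have key : (|z| / σ) * Real.exp (-((|z|/σ)^2)/2) ≤ 1 := stdPhi_mul_le _ hu0.le
  have hs : 0 < Real.sqrt (2 * Real.pi) := Real.sqrt_pos.2 (by positivity)
  have hsq : (z / σ)^2 = (|z|/σ)^2 := by rw [div_pow, div_pow, sq_abs]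
  rw [stdPhi, hsq]
  have h1 : (2 / σ) * (Real.exp (-((|z|/σ)^2)/2) / Real.sqrt (2 * Real.pi))
      = (2 / (Real.sqrt (2 * Real.pi) * |z|)) * ((|z|/σ) * Real.exp (-((|z|/σ)^2)/2)) := by
    field_simp
  rw [h1]
  have h2 : (0:ℝ) ≤ 2 / (Real.sqrt (2 * Real.pi) * |z|) := by positivity
  calc (2 / (Real.sqrt (2 * Real.pi) * |z|)) * ((|z|/σ) * Real.exp (-((|z|/σ)^2)/2))
      ≤ (2 / (Real.sqrt (2 * Real.pi) * |z|)) * 1 := mul_le_mul_of_nonneg_left key h2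
    _ = 2 / (Real.sqrt (2 * Real.pi) * |z|) := mul_one _

lemma snPDF_nonneg {σ : ℝ} (hσ : 0 < σ) (lam z : ℝ) : 0 ≤ snPDF 0 lam σ z :=
  mul_nonneg (mul_nonneg (by positivity) (stdPhi_pos _).le) (stdPhiCDF_nonneg _)

lemma snPDF_le {σ z : ℝ} (hσ : 0 < σ) (hz : z ≠ 0) (lam : ℝ) :
    snPDF 0 lam σ z ≤ 2 / (Real.sqrt (2 * Real.pi) * |z|) := by
  have h0 : 0 ≤ (2 / σ) * stdPhi ((z - 0) / σ) :=
    mul_nonneg (by positivity) (stdPhi_pos _).le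
  calc snPDF 0 lam σ z ≤ (2 / σ) * stdPhi ((z - 0) / σ) * 1 :=
        mul_le_mul_of_nonneg_left (stdPhiCDF_le_one _) h0
    _ = (2 / σ) * stdPhi (z / σ) := by rw [mul_one, sub_zero]
    _ ≤ _ := phi_scale_bound hσ hz

lemma measurable_snPDF (lam z : ℝ) : Measurable (fun σ => snPDF 0 lam σ z) := by
  unfold snPDF
  exact ((measurable_const.div measurable_id).mul
    (continuous_stdPhi.measurable.comp (measurable_const.div measurable_id))).mul
    (continuous_stdPhiCDF.measurable.comp ((measurable_const.div measurable_id).const_mul lam))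

lemma ae_pos_of_conc {G : Measure ℝ} (hG0 : G {σ : ℝ | σ ≤ 0} = 0) :
    ∀ᵐ σ ∂G, 0 < σ := by
  rw [ae_iff]
  simpa [not_lt] using hG0

lemma integrable_snPDF {G : Measure ℝ} [IsProbabilityMeasure G]
    (hG0 : G {σ : ℝ | σ ≤ 0} = 0) (lam : ℝ) {z : ℝ} (hz : z ≠ 0) :
    Integrable (fun σ => snPDF 0 lam σ z) G := by
  refine Integrable.mono' (integrable_const (2 / (Real.sqrt (2 * Real.pi) * |z|)))
    (measurable_snPDF lam z).aestronglyMeasurable ?_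
  filter_upwards [ae_pos_of_conc hG0] with σ hσ
  rw [Real.norm_eq_abs, abs_of_nonneg (snPDF_nonneg hσ lam z)]
  exact snPDF_le hσ hz lam

lemma snPDF_add_neg {σ : ℝ} (hσ : 0 < σ) (lam z : ℝ) :
    snPDF 0 lam σ z + snPDF 0 lam σ (-z) = (2 / σ) * stdPhi (z / σ) := by
  unfold snPDF
  rw [sub_zero, sub_zero]
  have h1 : stdPhi (-z / σ) = stdPhi (z / σ) := by
    rw [show -z / σ = -(z / σ) by ring, stdPhi_even]
  have h2 : lam * (-z / σ) = -(lam * (z / σ)) := by ring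
  rw [h1, h2]
  have := stdPhiCDF_add_neg (lam * (z / σ))
  linear_combination (2 / σ * stdPhi (z / σ)) * this

lemma integrable_phiscale {G : Measure ℝ} [IsProbabilityMeasure G]
    (hG0 : G {σ : ℝ | σ ≤ 0} = 0) {z : ℝ} (hz : z ≠ 0) :
    Integrable (fun σ => (2 / σ) * stdPhi (z / σ)) G := by
  refine Integrable.mono' (integrable_const (2 / (Real.sqrt (2 * Real.pi) * |z|)))
    ((measurable_const.div measurable_id).mul
      (continuous_stdPhi.measurable.comp (measurable_const.div measurable_id))).aestronglyMeasurable ?_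
  filter_upwards [ae_pos_of_conc hG0] with σ hσ
  rw [Real.norm_eq_abs, abs_of_nonneg (mul_nonneg (by positivity) (stdPhi_pos _).le)]
  exact phi_scale_bound hσ hz

lemma snsm_symm {G : Measure ℝ} [IsProbabilityMeasure G]
    (hG0 : G {σ : ℝ | σ ≤ 0} = 0) (lam : ℝ) {z : ℝ} (hz : z ≠ 0) :
    snsmPDF 0 lam G z + snsmPDF 0 lam G (-z) = ∫ σ, (2 / σ) * stdPhi (z / σ) ∂G := by
  rw [snsmPDF, snsmPDF, ← integral_add (integrable_snPDF hG0 lam hz)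
    (integrable_snPDF hG0 lam (neg_ne_zero.2 hz))]
  refine integral_congr_ae ?_
  filter_upwards [ae_pos_of_conc hG0] with σ hσ
  exact snPDF_add_neg hσ lam z

lemma meas_phiscale (z : ℝ) : Measurable (fun σ : ℝ => (2 / σ) * stdPhi (z / σ)) :=
  (measurable_const.div measurable_id).mul
    (continuous_stdPhi.measurable.comp (measurable_const.div measurable_id))

lemma contAt_D {G : Measure ℝ} [IsProbabilityMeasure G] (hG0 : G {σ : ℝ | σ ≤ 0} = 0)
    {z0 : ℝ} (hz0 : 0 < z0) :
    ContinuousAt (fun z => ∫ σ, (2 / σ) * stdPhi (z / σ) ∂G) z0 := by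
  apply continuousAt_of_dominated (bound := fun _ : ℝ => 2 / (Real.sqrt (2 * Real.pi) * (z0 / 2)))
  · exact Filter.Eventually.of_forall fun z => (meas_phiscale z).aestronglyMeasurable
  · have hmem : Set.Ioi (z0 / 2) ∈ nhds z0 := Ioi_mem_nhds (by linarith)
    filter_upwards [hmem] with z hz
    filter_upwards [ae_pos_of_conc hG0] with σ hσ
    have hz' : (0:ℝ) < z := lt_trans (by linarith) hz
    have h1 : (2 / σ) * stdPhi (z / σ) ≤ 2 / (Real.sqrt (2 * Real.pi) * |z|) :=
      phi_scale_bound hσ hz'.ne'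
    have h2 : 2 / (Real.sqrt (2 * Real.pi) * |z|) ≤ 2 / (Real.sqrt (2 * Real.pi) * (z0 / 2)) := by
      have hs : 0 < Real.sqrt (2 * Real.pi) := Real.sqrt_pos.2 (by positivity)
      have : z0 / 2 ≤ |z| := by rw [abs_of_pos hz']; exact hz.le
      gcongr
    rw [Real.norm_eq_abs, abs_of_nonneg (mul_nonneg (by positivity) (stdPhi_pos _).le)]
    linarith
  · exact integrable_const _
  · filter_upwards [ae_pos_of_conc hG0] with σ hσ
    exact ((continuous_const.mul (continuous_stdPhi.comp
      (continuous_id.div_const σ))).continuousAt)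

lemma eq_of_ae_of_contAt {f g : ℝ → ℝ} (hae : ∀ᵐ z ∂(volume : Measure ℝ), f z = g z)
    {z0 : ℝ} (hf : ContinuousAt f z0) (hg : ContinuousAt g z0) : f z0 = g z0 := by
  by_contra hne
  have hc : ContinuousAt (fun z => f z - g z) z0 := hf.sub hg
  have hU : {z | f z - g z ≠ 0} ∈ nhds z0 :=
    hc.preimage_mem_nhds (isOpen_ne.mem_nhds (sub_ne_zero.2 hne))
  obtain ⟨V, hVU, hVopen, hz0V⟩ := mem_nhds_iff.1 hU
  have hnull : volume {z | f z - g z ≠ 0} = 0 := by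
    refine measure_mono_null (fun z h => ?_) ((ae_iff).1 hae)
    simpa [sub_ne_zero] using h
  exact absurd (measure_mono_null hVU hnull) (hVopen.measure_pos volume ⟨z0, hz0V⟩).ne'

lemma D_eq {lam lam' : ℝ} {G G' : Measure ℝ}
    [IsProbabilityMeasure G] (hG0 : G {σ : ℝ | σ ≤ 0} = 0)
    [IsProbabilityMeasure G'] (hG0' : G' {σ : ℝ | σ ≤ 0} = 0)
    (heq : ∀ᵐ z ∂(volume : Measure ℝ), snsmPDF 0 lam G z = snsmPDF 0 lam' G' z) :
    ∀ z : ℝ, 0 < z → ∫ σ, (2 / σ) * stdPhi (z / σ) ∂G = ∫ σ, (2 / σ) * stdPhi (z / σ) ∂G' := by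
  have hneg : ∀ᵐ z ∂(volume : Measure ℝ), snsmPDF 0 lam G (-z) = snsmPDF 0 lam' G' (-z) := by
    rw [ae_iff] at heq ⊢
    have hset : {z : ℝ | ¬ snsmPDF 0 lam G (-z) = snsmPDF 0 lam' G' (-z)}
        = -{z : ℝ | ¬ snsmPDF 0 lam G z = snsmPDF 0 lam' G' z} := by
      ext z; simp [Set.mem_neg]
    rw [hset, Measure.measure_neg]
    exact heq
  have hz0 : ∀ᵐ z ∂(volume : Measure ℝ), z ≠ 0 := by
    rw [ae_iff]
    simp only [ne_eq, not_not, Set.setOf_eq_eq_singleton]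
    exact measure_singleton 0
  have hae : ∀ᵐ z ∂(volume : Measure ℝ),
      (fun z => ∫ σ, (2 / σ) * stdPhi (z / σ) ∂G) z
      = (fun z => ∫ σ, (2 / σ) * stdPhi (z / σ) ∂G') z := by
    filter_upwards [heq, hneg, hz0] with z h1 h2 h3
    show (∫ σ, (2 / σ) * stdPhi (z / σ) ∂G) = ∫ σ, (2 / σ) * stdPhi (z / σ) ∂G'
    rw [← snsm_symm hG0 lam h3, ← snsm_symm hG0' lam' h3, h1, h2]
  intro z hz
  exact eq_of_ae_of_contAt hae (contAt_D hG0 hz) (contAt_D hG0' hz)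

section MomentDet

abbrev KK : Set ℝ := Set.Icc (0:ℝ) 1

lemma integrable_cm {ν : Measure KK} [IsFiniteMeasure ν] (g : C(KK, ℝ)) :
    Integrable (fun y => g y) ν := by
  refine Integrable.mono' (integrable_const ‖g‖)
    g.continuous.measurable.aestronglyMeasurable ?_
  exact Filter.Eventually.of_forall fun y => g.norm_coe_le_norm y

lemma integrable_pow_K {ν : Measure KK} [IsFiniteMeasure ν] (n : ℕ) :
    Integrable (fun y : KK => (y : ℝ) ^ n) ν := by
  refine Integrable.mono' (integrable_const 1)
    ((measurable_subtype_coe.pow_const n).aestronglyMeasurable) ?_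
  refine Filter.Eventually.of_forall fun y => ?_
  rw [Real.norm_eq_abs, abs_of_nonneg (pow_nonneg y.2.1 n)]
  exact pow_le_one₀ y.2.1 y.2.2

lemma poly_integral_eq {ν ν' : Measure KK} [IsFiniteMeasure ν] [IsFiniteMeasure ν']
    (hmom : ∀ n : ℕ, ∫ y : KK, (y : ℝ) ^ n ∂ν = ∫ y : KK, (y : ℝ) ^ n ∂ν')
    (q : Polynomial ℝ) :
    ∫ y : KK, q.eval (y : ℝ) ∂ν = ∫ y : KK, q.eval (y : ℝ) ∂ν' := by
  have hrepr : ∀ (m : Measure KK), ∫ y : KK, q.eval (y : ℝ) ∂m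
      = ∫ y : KK, (∑ i ∈ Finset.range (q.natDegree + 1), q.coeff i * (y:ℝ) ^ i) ∂m := by
    intro m
    refine integral_congr_ae (Filter.Eventually.of_forall fun y => ?_)
    show Polynomial.eval (y:ℝ) q = _
    rw [Polynomial.eval_eq_sum_range]
  rw [hrepr ν, hrepr ν']
  rw [integral_finset_sum _ (fun i _ => (integrable_pow_K i).const_mul _),
      integral_finset_sum _ (fun i _ => (integrable_pow_K i).const_mul _)]
  refine Finset.sum_congr rfl fun i _ => ?_
  rw [integral_const_mul, integral_const_mul, hmom i]

lemma cm_integral_eq {ν ν' : Measure KK} [IsFiniteMeasure ν] [IsFiniteMeasure ν']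
    (hmom : ∀ n : ℕ, ∫ y : KK, (y : ℝ) ^ n ∂ν = ∫ y : KK, (y : ℝ) ^ n ∂ν')
    (g : C(KK, ℝ)) : ∫ y, g y ∂ν = ∫ y, g y ∂ν' := by
  set c : ℝ := (ν Set.univ).toReal + (ν' Set.univ).toReal with hc
  have hc0 : 0 ≤ c := by positivity
  have key : ∀ ε : ℝ, 0 < ε → |(∫ y, g y ∂ν) - ∫ y, g y ∂ν'| ≤ ε * c := by
    intro ε hε
    have hg : (g : C(KK, ℝ)) ∈ closure ((polynomialFunctions KK : Subalgebra ℝ C(KK, ℝ)) :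
        Set C(KK, ℝ)) := by
      rw [← Subalgebra.topologicalClosure_coe, polynomialFunctions_closure_eq_top]
      trivial
    obtain ⟨p, hpmem, hpd⟩ := Metric.mem_closure_iff.1 hg ε hε
    have hp2 : p ∈ (polynomialFunctions KK : Set C(KK, ℝ)) := hpmem
    rw [polynomialFunctions_coe] at hp2
    obtain ⟨q, hq⟩ := hp2
    have hbound : ∀ y : KK, ‖g y - q.eval (y:ℝ)‖ ≤ ε := by
      intro y
      have h2 : dist (g y) (p y) ≤ dist g p := ContinuousMap.dist_apply_le_dist y
      have h3 : p y = q.eval (y:ℝ) := by rw [← hq]; rfl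
      rw [h3, dist_eq_norm] at h2
      exact le_trans h2 hpd.le
    have hqint : ∀ (m : Measure KK) [IsFiniteMeasure m],
        Integrable (fun y : KK => q.eval (y:ℝ)) m := by
      intro m _
      have : (fun y : KK => q.eval (y:ℝ)) = fun y => (q.toContinuousMapOn KK) y := rfl
      rw [this]
      exact integrable_cm _
    have hdiff : ∀ (m : Measure KK) [IsFiniteMeasure m],
        ‖(∫ y, g y ∂m) - ∫ y : KK, q.eval (y:ℝ) ∂m‖ ≤ ε * (m Set.univ).toReal := by
      intro m _
      rw [← integral_sub (integrable_cm g) (hqint m)]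
      exact norm_integral_le_of_norm_le_const
        (Filter.Eventually.of_forall fun y => hbound y)
    have h1 := hdiff ν
    have h2 := hdiff ν'
    have h3 := poly_integral_eq hmom q
    rw [Real.norm_eq_abs] at h1 h2
    have habs := abs_sub_abs_le_abs_sub ((∫ y, g y ∂ν) - ∫ y : KK, q.eval (y:ℝ) ∂ν)
      ((∫ y, g y ∂ν') - ∫ y : KK, q.eval (y:ℝ) ∂ν')
    calc |(∫ y, g y ∂ν) - ∫ y, g y ∂ν'|
        = |((∫ y, g y ∂ν) - ∫ y : KK, q.eval (y:ℝ) ∂ν)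
            - ((∫ y, g y ∂ν') - ∫ y : KK, q.eval (y:ℝ) ∂ν')| := by rw [h3]; congr 1; ring
      _ ≤ |(∫ y, g y ∂ν) - ∫ y : KK, q.eval (y:ℝ) ∂ν|
            + |(∫ y, g y ∂ν') - ∫ y : KK, q.eval (y:ℝ) ∂ν'| := abs_sub _ _
      _ ≤ ε * (ν Set.univ).toReal + ε * (ν' Set.univ).toReal := add_le_add h1 h2
      _ = ε * c := by rw [hc]; ring
  by_contra hne
  have habs : 0 < |(∫ y, g y ∂ν) - ∫ y, g y ∂ν'| := abs_pos.2 (sub_ne_zero.2 hne)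
  rcases eq_or_lt_of_le hc0 with hcz | hcpos
  · have := key 1 one_pos
    rw [← hcz] at this
    simp at this
    exact hne (sub_eq_zero.1 this)
  · have := key (|(∫ y, g y ∂ν) - ∫ y, g y ∂ν'| / (2 * c)) (by positivity)
    rw [div_mul_eq_mul_div, mul_comm] at this
    have h' := (le_div_iff₀ (by positivity : (0:ℝ) < 2 * c)).1 this
    nlinarith [h', habs, hcpos]

end MomentDet

lemma measure_det_K {ν ν' : Measure KK} [IsFiniteMeasure ν] [IsFiniteMeasure ν']
    (hmom : ∀ n : ℕ, ∫ y : KK, (y : ℝ) ^ n ∂ν = ∫ y : KK, (y : ℝ) ^ n ∂ν') : ν = ν' := by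
  refine ext_of_forall_lintegral_eq_of_IsFiniteMeasure fun f => ?_
  have hg : (∫ y, ((f y : ℝ)) ∂ν) = ∫ y, (f y : ℝ) ∂ν' :=
    cm_integral_eq hmom ⟨fun y => (f y : ℝ), NNReal.continuous_coe.comp f.continuous⟩
  have h1 := BoundedContinuousFunction.toReal_lintegral_coe_eq_integral f ν
  have h2 := BoundedContinuousFunction.toReal_lintegral_coe_eq_integral f ν'
  have hfin1 : (∫⁻ x, (f x : ℝ≥0∞) ∂ν) ≠ ⊤ :=
    (BoundedContinuousFunction.lintegral_lt_top_of_nnreal ν f).ne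
  have hfin2 : (∫⁻ x, (f x : ℝ≥0∞) ∂ν') ≠ ⊤ :=
    (BoundedContinuousFunction.lintegral_lt_top_of_nnreal ν' f).ne
  exact (ENNReal.toReal_eq_toReal_iff' hfin1 hfin2).1 (by rw [h1, h2]; exact hg)

lemma moment_det {μ μ' : Measure ℝ} [IsFiniteMeasure μ] [IsFiniteMeasure μ']
    (h0 : μ (Set.Icc (0:ℝ) 1)ᶜ = 0) (h0' : μ' (Set.Icc (0:ℝ) 1)ᶜ = 0)
    (hmom : ∀ n : ℕ, (∫ x, x ^ n ∂μ) = ∫ x, x ^ n ∂μ') : μ = μ' := by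
  have hemb : MeasurableEmbedding ((↑) : KK → ℝ) :=
    MeasurableEmbedding.subtype_coe measurableSet_Icc
  have hmap : ∀ (m : Measure ℝ), m (Set.Icc (0:ℝ) 1)ᶜ = 0 →
      (Measure.comap (↑) m : Measure KK).map (↑) = m := by
    intro m hm
    rw [hemb.map_comap, Subtype.range_coe]
    refine Measure.restrict_eq_self_of_ae_mem ?_
    rw [ae_iff]
    convert hm using 2
    rfl
  haveI : IsFiniteMeasure (Measure.comap ((↑) : KK → ℝ) μ) := by
    constructor
    rw [hemb.comap_apply]
    exact measure_lt_top μ _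
  haveI : IsFiniteMeasure (Measure.comap ((↑) : KK → ℝ) μ') := by
    constructor
    rw [hemb.comap_apply]
    exact measure_lt_top μ' _
  have htrans : ∀ (m : Measure ℝ), m (Set.Icc (0:ℝ) 1)ᶜ = 0 → ∀ n : ℕ,
      (∫ y : KK, (y : ℝ) ^ n ∂(Measure.comap (↑) m)) = ∫ x, x ^ n ∂m := by
    intro m hm n
    conv_rhs => rw [← hmap m hm]
    rw [integral_map hemb.measurable.aemeasurable
      ((continuous_pow n).measurable.aestronglyMeasurable)]
  have hcomap : Measure.comap ((↑) : KK → ℝ) μ = Measure.comap (↑) μ' := by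
    refine measure_det_K fun n => ?_
    rw [htrans μ h0 n, htrans μ' h0' n, hmom n]
  rw [← hmap μ h0, ← hmap μ' h0', hcomap]

noncomputable def pmap (σ : ℝ) : ℝ := if 0 < σ then Real.exp (-(σ⁻¹ ^ 2) / 2) else σ - 1

noncomputable def rwt (x : ℝ) : ℝ :=
  (2 / Real.sqrt (2 * Real.pi)) * Real.sqrt (-2 * Real.log x)

lemma pmap_measurable : Measurable pmap := by
  unfold pmap
  refine Measurable.ite (measurableSet_lt measurable_const measurable_id) ?_ ?_
  · exact Real.measurable_exp.comp ((measurable_id.inv.pow_const 2).neg.div_const 2)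
  · exact measurable_id.sub_const 1

lemma pmap_pos_mem {σ : ℝ} (hσ : 0 < σ) : pmap σ ∈ Set.Ioo (0:ℝ) 1 := by
  rw [pmap, if_pos hσ]
  constructor
  · exact Real.exp_pos _
  · rw [← Real.exp_zero]
    apply Real.exp_lt_exp.2
    have : 0 < σ⁻¹ ^ 2 := by positivity
    linarith

lemma pmap_pos_eq {σ : ℝ} (h : 0 < σ) : pmap σ = Real.exp (-(σ⁻¹ ^ 2) / 2) := if_pos h

lemma pmap_nonpos_eq {σ : ℝ} (h : σ ≤ 0) : pmap σ = σ - 1 := if_neg (not_lt.2 h)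

lemma pmap_inj : Function.Injective pmap := by
  intro a b hab
  rcases lt_or_ge 0 a with ha | ha <;> rcases lt_or_ge 0 b with hb | hb
  · rw [pmap_pos_eq ha, pmap_pos_eq hb] at hab
    have h2 : -(a⁻¹ ^ 2) / 2 = -(b⁻¹ ^ 2) / 2 := Real.exp_eq_exp.1 hab
    have h3 : (a⁻¹ - b⁻¹) * (a⁻¹ + b⁻¹) = 0 := by nlinarith
    have ha' : 0 < a⁻¹ := inv_pos.2 ha
    have hb' : 0 < b⁻¹ := inv_pos.2 hb
    rcases mul_eq_zero.1 h3 with h | h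
    · have : a⁻¹ = b⁻¹ := by linarith
      exact inv_injective this
    · linarith
  · exfalso
    have h1 := pmap_pos_mem ha
    rw [pmap_pos_eq ha, pmap_nonpos_eq hb] at hab
    rw [← pmap_pos_eq ha] at hab
    rw [hab] at h1
    have : b - 1 ≤ -1 := by linarith
    linarith [h1.1]
  · exfalso
    have h1 := pmap_pos_mem hb
    rw [pmap_nonpos_eq ha, pmap_pos_eq hb] at hab
    rw [← pmap_pos_eq hb] at hab
    rw [← hab] at h1
    have : a - 1 ≤ -1 := by linarith
    linarith [h1.1]
  · rw [pmap_nonpos_eq ha, pmap_nonpos_eq hb] at hab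
    linarith

lemma rwt_nonneg (x : ℝ) : 0 ≤ rwt x := by
  unfold rwt
  have hs : 0 < Real.sqrt (2 * Real.pi) := Real.sqrt_pos.2 (by positivity)
  positivity

lemma measurable_rwt : Measurable rwt := by
  unfold rwt
  exact measurable_const.mul
    (Real.continuous_sqrt.measurable.comp (Real.measurable_log.const_mul (-2)))

lemma sqrt2pi_ge_one : 1 ≤ Real.sqrt (2 * Real.pi) := by
  rw [show (1:ℝ) = Real.sqrt 1 by simp]
  exact Real.sqrt_le_sqrt (by nlinarith [Real.pi_gt_three])

lemma rwt_mul_le (x : ℝ) : rwt x * x ≤ 2 := by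
  have hs : 0 < Real.sqrt (2 * Real.pi) := Real.sqrt_pos.2 (by positivity)
  rcases le_or_gt x 0 with hx | hx
  · have : rwt x * x ≤ 0 := mul_nonpos_of_nonneg_of_nonpos (rwt_nonneg x) hx
    linarith
  rcases le_or_gt 1 x with hx1 | hx1
  · have hlog : 0 ≤ Real.log x := Real.log_nonneg hx1
    have : Real.sqrt (-2 * Real.log x) = 0 := Real.sqrt_eq_zero'.2 (by linarith)
    rw [rwt, this, mul_zero, zero_mul]
    norm_num
  · set L : ℝ := -Real.log x with hL
    have hL0 : 0 ≤ L := by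
      rw [hL]
      have := Real.log_nonpos hx.le hx1.le
      linarith
    have hxe : x = Real.exp (-L) := by
      rw [hL, neg_neg, Real.exp_log hx]
    have h1 : Real.sqrt (-2 * Real.log x) = Real.sqrt (2 * L) := by rw [hL]; ring_nf
    have h2 : Real.sqrt (2 * L) ≤ 1 + L := by
      rw [show (1:ℝ) + L = Real.sqrt ((1+L)^2) from (Real.sqrt_sq (by linarith)).symm]
      exact Real.sqrt_le_sqrt (by nlinarith)
    have h3 : (1 + L) * x ≤ 1 := by
      rw [hxe]
      have h4 : (1 + L) ≤ Real.exp L := by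
        have := Real.add_one_le_exp L
        linarith
      calc (1 + L) * Real.exp (-L) ≤ Real.exp L * Real.exp (-L) :=
            mul_le_mul_of_nonneg_right h4 (Real.exp_pos _).le
        _ = 1 := by rw [← Real.exp_add]; simp
    have h5 : Real.sqrt (2 * L) * x ≤ 1 := by
      calc Real.sqrt (2 * L) * x ≤ (1 + L) * x :=
            mul_le_mul_of_nonneg_right h2 hx.le
        _ ≤ 1 := h3
    rw [rwt, h1]
    have h6 : (2 / Real.sqrt (2 * Real.pi)) ≤ 2 := by
      rw [div_le_iff₀ hs]
      nlinarith [sqrt2pi_ge_one]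
    calc 2 / Real.sqrt (2 * Real.pi) * Real.sqrt (2 * L) * x
        = (2 / Real.sqrt (2 * Real.pi)) * (Real.sqrt (2 * L) * x) := by ring
      _ ≤ (2 / Real.sqrt (2 * Real.pi)) * 1 :=
          mul_le_mul_of_nonneg_left h5 (by positivity)
      _ ≤ 2 := by linarith

lemma rwt_mul_pos {x : ℝ} (hx : x ∈ Set.Ioo (0:ℝ) 1) : 0 < rwt x * x := by
  have hs : 0 < Real.sqrt (2 * Real.pi) := Real.sqrt_pos.2 (by positivity)
  have hlog : Real.log x < 0 := Real.log_neg hx.1 hx.2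
  have : 0 < -2 * Real.log x := by linarith
  have h1 : 0 < Real.sqrt (-2 * Real.log x) := Real.sqrt_pos.2 this
  have : 0 < rwt x := by rw [rwt]; positivity
  exact mul_pos this hx.1

lemma key_identity {σ : ℝ} (hσ : 0 < σ) (n : ℕ) :
    rwt (pmap σ) * (pmap σ) ^ n = (2 / σ) * stdPhi (Real.sqrt n / σ) := by
  rw [pmap_pos_eq hσ]
  have hlog : Real.log (Real.exp (-(σ⁻¹ ^ 2) / 2)) = -(σ⁻¹ ^ 2) / 2 := Real.log_exp _
  have hrwt : rwt (Real.exp (-(σ⁻¹ ^ 2) / 2)) = (2 / Real.sqrt (2 * Real.pi)) * σ⁻¹ := by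
    rw [rwt, hlog]
    congr 1
    rw [show -2 * (-(σ⁻¹ ^ 2) / 2) = σ⁻¹ ^ 2 by ring]
    exact Real.sqrt_sq (inv_pos.2 hσ).le
  have hpow : (Real.exp (-(σ⁻¹ ^ 2) / 2)) ^ n = Real.exp (-(n * σ⁻¹ ^ 2) / 2) := by
    rw [← Real.exp_nat_mul]
    congr 1
    ring
  rw [hrwt, hpow, stdPhi]
  have hsq : (Real.sqrt n / σ) ^ 2 = n * σ⁻¹ ^ 2 := by
    rw [div_pow, Real.sq_sqrt (Nat.cast_nonneg n)]
    ring
  rw [hsq]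
  field_simp

lemma G_eq {G G' : Measure ℝ} [IsProbabilityMeasure G] [IsProbabilityMeasure G']
    (hG0 : G {σ : ℝ | σ ≤ 0} = 0) (hG0' : G' {σ : ℝ | σ ≤ 0} = 0)
    (hD : ∀ z : ℝ, 0 < z →
      ∫ σ, (2 / σ) * stdPhi (z / σ) ∂G = ∫ σ, (2 / σ) * stdPhi (z / σ) ∂G') :
    G = G' := by
  set μ : Measure ℝ := G.map pmap with hμdef
  set μ' : Measure ℝ := G'.map pmap with hμ'def
  -- moments with weight
  have hwm : ∀ (H : Measure ℝ), H {σ : ℝ | σ ≤ 0} = 0 → ∀ m : ℕ, 1 ≤ m →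
      (∫ x, rwt x * x ^ m ∂(H.map pmap)) = ∫ σ, (2 / σ) * stdPhi (Real.sqrt m / σ) ∂H := by
    intro H hH m _
    rw [integral_map (f := fun x => rwt x * x ^ m) pmap_measurable.aemeasurable
      ((measurable_rwt.mul (continuous_pow m).measurable).aestronglyMeasurable)]
    refine integral_congr_ae ?_
    filter_upwards [ae_pos_of_conc hH] with σ hσ
    exact key_identity hσ m
  have hmomw : ∀ m : ℕ, 1 ≤ m → (∫ x, rwt x * x ^ m ∂μ) = ∫ x, rwt x * x ^ m ∂μ' := by
    intro m hm
    rw [hwm G hG0 m hm, hwm G' hG0' m hm]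
    refine hD _ (Real.sqrt_pos.2 ?_)
    exact_mod_cast Nat.pos_of_ne_zero (by omega)
  -- concentration of μ, μ'
  have hconc : ∀ (H : Measure ℝ), H {σ : ℝ | σ ≤ 0} = 0 →
      (H.map pmap) (Set.Ioo (0:ℝ) 1)ᶜ = 0 := by
    intro H hH
    rw [Measure.map_apply pmap_measurable (measurableSet_Ioo.compl)]
    refine measure_mono_null (fun σ hσ => ?_) hH
    simp only [Set.mem_preimage, Set.mem_compl_iff] at hσ
    by_contra hc
    simp only [Set.mem_setOf_eq, not_le] at hc
    exact hσ (pmap_pos_mem hc)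
  -- the withDensity measures
  set d : ℝ → ℝ≥0 := fun x => Real.toNNReal (rwt x * x) with hd
  have hdmeas : Measurable d := (measurable_rwt.mul measurable_id).real_toNNReal
  set dd : ℝ → ℝ≥0∞ := fun x => (d x : ℝ≥0∞) with hdd
  have hddmeas : Measurable dd := hdmeas.coe_nnreal_ennreal
  have hdle : ∀ x, dd x ≤ (2 : ℝ≥0∞) := by
    intro x
    rw [hdd, hd]
    simp only
    rw [show (2:ℝ≥0∞) = ((2:ℝ≥0) : ℝ≥0∞) by norm_num, ENNReal.coe_le_coe]
    rw [← Real.toNNReal_ofNat]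
    exact Real.toNNReal_le_toNNReal (rwt_mul_le x)
  have hfin : ∀ (m : Measure ℝ), IsProbabilityMeasure m → IsFiniteMeasure (m.withDensity dd) := by
    intro m hm
    refine isFiniteMeasure_withDensity (ne_top_of_le_ne_top ?_ (lintegral_mono hdle))
    rw [lintegral_const, hm.measure_univ, mul_one]
    norm_num
  haveI hfin1 := hfin μ (by rw [hμdef]; exact Measure.isProbabilityMeasure_map pmap_measurable.aemeasurable)
  haveI hfin2 := hfin μ' (by rw [hμ'def]; exact Measure.isProbabilityMeasure_map pmap_measurable.aemeasurable)
  -- ae membership in Ioo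
  have haemem : ∀ (H : Measure ℝ), H {σ : ℝ | σ ≤ 0} = 0 →
      ∀ᵐ x ∂(H.map pmap), x ∈ Set.Ioo (0:ℝ) 1 := by
    intro H hH
    rw [ae_iff]
    convert hconc H hH using 2
    rfl
  -- moments of withDensity
  have hmomd : ∀ (m : Measure ℝ), (∀ᵐ x ∂m, x ∈ Set.Ioo (0:ℝ) 1) → ∀ n : ℕ,
      (∫ x, x ^ n ∂(m.withDensity dd)) = ∫ x, rwt x * x ^ (n+1) ∂m := by
    intro m hmem n
    rw [hdd]
    rw [integral_withDensity_eq_integral_smul hdmeas]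
    refine integral_congr_ae ?_
    filter_upwards [hmem] with x hx
    have h1 : 0 ≤ rwt x * x := (rwt_mul_pos hx).le
    rw [hd]
    simp only [NNReal.smul_def, Real.coe_toNNReal _ h1, smul_eq_mul]
    ring
  -- μ̃ = μ̃'
  have hconcμ := hconc G hG0
  have hconcμ' := hconc G' hG0'
  have hIccconc : ∀ (m : Measure ℝ), m (Set.Ioo (0:ℝ) 1)ᶜ = 0 →
      (m.withDensity dd) (Set.Icc (0:ℝ) 1)ᶜ = 0 := by
    intro m hm
    rw [withDensity_apply _ measurableSet_Icc.compl]
    refine setLIntegral_measure_zero _ _ (measure_mono_null ?_ hm)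
    exact Set.compl_subset_compl.2 Set.Ioo_subset_Icc_self
  have htilde : μ.withDensity dd = μ'.withDensity dd := by
    refine moment_det (hIccconc μ hconcμ) (hIccconc μ' hconcμ') fun n => ?_
    rw [hmomd μ (haemem G hG0) n, hmomd μ' (haemem G' hG0') n]
    exact hmomw (n+1) (by omega)
  -- recover μ = μ'
  have hrec : ∀ (m : Measure ℝ), (∀ᵐ x ∂m, x ∈ Set.Ioo (0:ℝ) 1) →
      (m.withDensity dd).withDensity (fun x => (dd x)⁻¹) = m := by
    intro m hmem
    rw [← withDensity_mul m hddmeas (g := fun x => (dd x)⁻¹) hddmeas.inv]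
    have : (dd * fun x => (dd x)⁻¹) =ᵐ[m] (1 : ℝ → ℝ≥0∞) := by
      filter_upwards [hmem] with x hx
      show dd x * (dd x)⁻¹ = 1
      have h1 : dd x ≠ 0 := by
        rw [hdd, hd]
        simp only [ne_eq, ENNReal.coe_eq_zero, Real.toNNReal_eq_zero, not_le]
        exact rwt_mul_pos hx
      have h2 : dd x ≠ ⊤ := ENNReal.coe_ne_top
      exact ENNReal.mul_inv_cancel h1 h2
    rw [withDensity_congr_ae this, withDensity_one]
  have hμeq : μ = μ' := by
    rw [← hrec μ (haemem G hG0), ← hrec μ' (haemem G' hG0'), htilde]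
  -- recover G = G'
  have hemb : MeasurableEmbedding pmap := pmap_measurable.measurableEmbedding pmap_inj
  refine Measure.ext fun s hs => ?_
  have h1 : G s = μ (pmap '' s) := by
    rw [hμdef, Measure.map_apply pmap_measurable (hemb.measurableSet_image' hs),
      pmap_inj.preimage_image]
  have h2 : G' s = μ' (pmap '' s) := by
    rw [hμ'def, Measure.map_apply pmap_measurable (hemb.measurableSet_image' hs),
      pmap_inj.preimage_image]
  rw [h1, h2, hμeq]

lemma lam_contr {lam lam' : ℝ} (hlt : lam' < lam) {G : Measure ℝ} [IsProbabilityMeasure G]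
    (hG0 : G {σ : ℝ | σ ≤ 0} = 0) {z : ℝ} (hz : 0 < z)
    (h0 : snsmPDF 0 lam G z = snsmPDF 0 lam' G z) : False := by
  have hint1 := integrable_snPDF hG0 lam hz.ne'
  have hint2 := integrable_snPDF hG0 lam' hz.ne'
  have hzero : ∫ σ, (snPDF 0 lam σ z - snPDF 0 lam' σ z) ∂G = 0 := by
    rw [integral_sub hint1 hint2]
    rw [snsmPDF, snsmPDF] at h0
    rw [h0, sub_self]
  have hdiff : ∀ σ : ℝ, 0 < σ →
      0 < snPDF 0 lam σ z - snPDF 0 lam' σ z := by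
    intro σ hσ
    have h1 : snPDF 0 lam σ z - snPDF 0 lam' σ z
        = (2 / σ) * stdPhi ((z - 0) / σ)
          * (stdPhiCDF (lam * ((z - 0) / σ)) - stdPhiCDF (lam' * ((z - 0) / σ))) := by
      rw [snPDF, snPDF]; ring
    rw [h1]
    have hzσ : 0 < (z - 0) / σ := by rw [sub_zero]; exact div_pos hz hσ
    have h2 : stdPhiCDF (lam' * ((z - 0) / σ)) < stdPhiCDF (lam * ((z - 0) / σ)) :=
      stdPhiCDF_strictMono (by nlinarith)
    have h3 : 0 < (2 / σ) * stdPhi ((z - 0) / σ) :=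
      mul_pos (by positivity) (stdPhi_pos _)
    nlinarith
  have hnonneg : 0 ≤ᵐ[G] fun σ => snPDF 0 lam σ z - snPDF 0 lam' σ z := by
    filter_upwards [ae_pos_of_conc hG0] with σ hσ
    exact (hdiff σ hσ).le
  have hae0 := (integral_eq_zero_iff_of_nonneg_ae hnonneg (hint1.sub hint2)).1 hzero
  haveI : (ae G).NeBot := ae_neBot.2 (IsProbabilityMeasure.ne_zero G)
  obtain ⟨σ, hσpos, hσ0⟩ := ((ae_pos_of_conc hG0).and hae0).exists
  have := hdiff σ hσpos
  rw [Pi.zero_apply] at hσ0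
  simp only at hσ0
  linarith [this, hσ0.le, hσ0.ge]

theorem stmt2 (lam lam' : ℝ) (G G' : Measure ℝ)
    (hG : IsProbabilityMeasure G) (hG0 : G {σ : ℝ | σ ≤ 0} = 0)
    (hG' : IsProbabilityMeasure G') (hG0' : G' {σ : ℝ | σ ≤ 0} = 0)
    (heq : ∀ᵐ z ∂(volume : Measure ℝ), snsmPDF 0 lam G z = snsmPDF 0 lam' G' z) :
    lam = lam' ∧ G = G' := by
  haveI := hG
  haveI := hG'
  have hD := D_eq hG0 hG0' heq
  have hGeq : G = G' := G_eq hG0 hG0' hD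
  subst hGeq
  refine ⟨?_, rfl⟩
  have hex : ∃ z : ℝ, 0 < z ∧ snsmPDF 0 lam G z = snsmPDF 0 lam' G z := by
    by_contra h
    push_neg at h
    have hsub : Set.Ioi (0:ℝ) ⊆ {z | ¬ snsmPDF 0 lam G z = snsmPDF 0 lam' G z} :=
      fun z hzz => h z hzz
    have hnull := measure_mono_null hsub (ae_iff.1 heq)
    rw [Real.volume_Ioi] at hnull
    exact (by norm_num : (⊤:ℝ≥0∞) ≠ 0) hnull
  obtain ⟨z, hzp, he⟩ := hex
  rcases lt_trichotomy lam lam' with h | h | h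
  · exact (lam_contr h hG0 hzp he.symm).elim
  · exact h
  · exact (lam_contr h hG0 hzp he).elim
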